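/- Let f ∈ L²(0,T) satisfy |f(t)| ≤ C t^{m'} for almost every t ∈ (0,δ), where C > 0, 0 < δ < T, and m' is a nonnegative integer. Then with z as above, ∫₀^T e^{-z²t} f(t) dt = O(τ^{-(m'+1)}) as τ → ∞. -/

import Mathlib

open MeasureTheory

noncomputable def zfun (c τ : ℝ) : ℂ :=
  -(c * τ) * (1 + Complex.I * Real.sqrt (1 - 1 / (c ^ 2 * τ)))

lemma zfun_sq_re (c τ : ℝ) (hc : 0 < c) (hτ : 1 / c ^ 2 ≤ τ) : ((zfun c τ) ^ 2).re = τ := by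
  have hτ0 : 0 < τ := lt_of_lt_of_le (by positivity) hτ
  have h1 : (0:ℝ) ≤ 1 - 1 / (c ^ 2 * τ) := by
    rw [sub_nonneg, div_le_one (by positivity)]
    calc (1:ℝ) = c^2 * (1/c^2) := by field_simp
    _ ≤ c^2 * τ := by nlinarith
  set s : ℝ := Real.sqrt (1 - 1 / (c ^ 2 * τ)) with hsdef
  have hs : s ^ 2 = 1 - 1 / (c ^ 2 * τ) := Real.sq_sqrt h1
  have hre : ((-(↑c * ↑τ) * (1 + Complex.I * ↑s) : ℂ) ^ 2).re = c^2 * τ^2 * (1 - s^2) := by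
    simp [pow_two, Complex.mul_re, Complex.mul_im]
    ring
  have hz : zfun c τ = (-(↑c * ↑τ) * (1 + Complex.I * ↑s) : ℂ) := rfl
  rw [hz, hre, hs]
  field_simp
  ring

lemma norm_exp_zfun (c τ t : ℝ) (hc : 0 < c) (hτ : 1 / c ^ 2 ≤ τ) :
    ‖Complex.exp (-(zfun c τ) ^ 2 * t)‖ = Real.exp (-(τ * t)) := by
  rw [Complex.norm_exp]
  congr 1
  have : (-(zfun c τ) ^ 2 * (t:ℂ)).re = -(((zfun c τ) ^ 2).re * t) := by
    simp [Complex.mul_re]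
  rw [this, zfun_sq_re c τ hc hτ]

theorem stmt_3 (c T δ C : ℝ) (hc : 0 < c) (hδ : 0 < δ) (hδT : δ < T) (hC : 0 < C)
    (m' : ℕ) (f : ℝ → ℂ)
    (hf : MemLp f 2 (volume.restrict (Set.Ioc (0 : ℝ) T)))
    (hbound : ∀ᵐ t ∂(volume.restrict (Set.Ioo (0 : ℝ) δ)), ‖f t‖ ≤ C * t ^ m') :
    (fun τ : ℝ => ∫ t in Set.Ioc (0 : ℝ) T, Complex.exp (-(zfun c τ) ^ 2 * t) * f t)
      =O[Filter.atTop] fun τ : ℝ => τ ^ (-(m' + 1 : ℝ)) := by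
  haveI : IsFiniteMeasure (volume.restrict (Set.Ioc (0 : ℝ) T)) := by
    constructor
    rw [Measure.restrict_apply_univ, Real.volume_Ioc]
    exact ENNReal.ofReal_lt_top
  have hfi : IntegrableOn f (Set.Ioc 0 T) := hf.integrable (by norm_num)
  have hfiδ : IntegrableOn f (Set.Ioc δ T) := hfi.mono_set (Set.Ioc_subset_Ioc hδ.le le_rfl)
  set M : ℝ := ∫ t in Set.Ioc δ T, ‖f t‖ with hMdef
  rw [Asymptotics.isBigO_iff]
  refine ⟨C * (Nat.factorial m' : ℝ) + 1, ?_⟩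
  have hev3 : ∀ᶠ τ : ℝ in Filter.atTop, M * (τ ^ ((m' : ℝ) + 1) * Real.exp (-δ * τ)) ≤ 1 := by
    have h := (tendsto_rpow_mul_exp_neg_mul_atTop_nhds_zero ((m' : ℝ) + 1) δ hδ).const_mul M
    rw [mul_zero] at h
    exact h.eventually_le_const one_pos
  filter_upwards [Filter.eventually_ge_atTop (1 / c ^ 2), Filter.eventually_ge_atTop (1 : ℝ),
    hev3] with τ h1 h2 h3
  have hτ0 : 0 < τ := lt_of_lt_of_le one_pos h2
  have hexp : ∀ t : ℝ, ‖Complex.exp (-(zfun c τ) ^ 2 * t)‖ = Real.exp (-(τ * t)) :=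
    fun t => norm_exp_zfun c τ t hc h1
  have hcont : Continuous fun t : ℝ => Complex.exp (-(zfun c τ) ^ 2 * t) :=
    Complex.continuous_exp.comp (by continuity)
  set g : ℝ → ℂ := fun t => Complex.exp (-(zfun c τ) ^ 2 * t) * f t with hgdef
  have hgi : IntegrableOn g (Set.Ioc 0 T) := by
    apply Integrable.bdd_mul (c := 1) hfi hcont.aestronglyMeasurable
    filter_upwards [ae_restrict_mem measurableSet_Ioc] with t ht
    rw [hexp t, Real.exp_le_one_iff]
    nlinarith [ht.1]
  have hsplit : (∫ t in Set.Ioc (0:ℝ) T, g t) =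
      (∫ t in Set.Ioc (0:ℝ) δ, g t) + ∫ t in Set.Ioc δ T, g t := by
    rw [← setIntegral_union (Set.Ioc_disjoint_Ioc_of_le le_rfl) measurableSet_Ioc
      (hgi.mono_set (Set.Ioc_subset_Ioc le_rfl hδT.le))
      (hgi.mono_set (Set.Ioc_subset_Ioc hδ.le le_rfl)),
      Set.Ioc_union_Ioc_eq_Ioc hδ.le hδT.le]
  -- integrability of the majorant on Ioi 0
  have hB : IntegrableOn (fun t : ℝ => C * (t ^ m' * Real.exp (-(τ * t)))) (Set.Ioi 0) := by
    apply Integrable.const_mul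
    have h := integrableOn_rpow_mul_exp_neg_mul_rpow (p := 1) (s := (m' : ℝ)) (b := τ)
      (lt_of_lt_of_le neg_one_lt_zero (Nat.cast_nonneg m')) one_pos hτ0
    apply h.congr_fun ?_ measurableSet_Ioi
    intro x hx
    show x ^ (m' : ℝ) * Real.exp (-τ * x ^ (1:ℝ)) = x ^ m' * Real.exp (-(τ * x))
    rw [Real.rpow_natCast, Real.rpow_one, neg_mul]
  -- part 1
  have hbound1 : ‖∫ t in Set.Ioc (0:ℝ) δ, g t‖ ≤
      C * (Nat.factorial m' : ℝ) * τ ^ (-((m' : ℝ) + 1)) := by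
    rw [integral_Ioc_eq_integral_Ioo]
    have hint1 : ‖∫ t in Set.Ioo (0:ℝ) δ, g t‖ ≤
        ∫ t in Set.Ioo (0:ℝ) δ, C * (t ^ m' * Real.exp (-(τ * t))) := by
      apply norm_integral_le_of_norm_le
        (hB.mono_set (Set.Ioo_subset_Ioi_self))
      filter_upwards [hbound, ae_restrict_mem measurableSet_Ioo] with t hb ht
      rw [hgdef]
      simp only
      rw [norm_mul, hexp t]
      calc Real.exp (-(τ*t)) * ‖f t‖ ≤ Real.exp (-(τ*t)) * (C * t ^ m') :=
            mul_le_mul_of_nonneg_left hb (Real.exp_nonneg _)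
        _ = C * (t ^ m' * Real.exp (-(τ*t))) := by ring
    have hmono : (∫ t in Set.Ioo (0:ℝ) δ, C * (t ^ m' * Real.exp (-(τ * t)))) ≤
        ∫ t in Set.Ioi (0:ℝ), C * (t ^ m' * Real.exp (-(τ * t))) := by
      apply setIntegral_mono_set hB ?_ (HasSubset.Subset.eventuallyLE Set.Ioo_subset_Ioi_self)
      filter_upwards [ae_restrict_mem measurableSet_Ioi] with t ht
      have : (0:ℝ) < t := ht
      positivity
    have hval : (∫ t in Set.Ioi (0:ℝ), C * (t ^ m' * Real.exp (-(τ * t)))) =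
        C * (Nat.factorial m' : ℝ) * τ ^ (-((m' : ℝ) + 1)) := by
      rw [integral_const_mul]
      have h := Real.integral_rpow_mul_exp_neg_mul_Ioi (a := (m' : ℝ) + 1) (r := τ)
        (by positivity) hτ0
      have heq : (∫ t in Set.Ioi (0:ℝ), t ^ m' * Real.exp (-(τ * t))) =
          ∫ t in Set.Ioi (0:ℝ), t ^ ((m' : ℝ) + 1 - 1) * Real.exp (-(τ * t)) := by
        apply setIntegral_congr_fun measurableSet_Ioi
        intro x hx
        show x ^ m' * Real.exp (-(τ * x)) = x ^ ((m':ℝ) + 1 - 1) * Real.exp (-(τ * x))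
        rw [add_sub_cancel_right, Real.rpow_natCast]
      rw [heq, h, Real.Gamma_nat_eq_factorial, one_div, Real.inv_rpow hτ0.le,
        ← Real.rpow_neg hτ0.le]
      ring
    linarith [hint1, hmono, hval.le, hval.ge]
  have hbound2 : ‖∫ t in Set.Ioc δ T, g t‖ ≤ Real.exp (-(τ * δ)) * M := by
    have hle : ‖∫ t in Set.Ioc δ T, g t‖ ≤ ∫ t in Set.Ioc δ T, Real.exp (-(τ * δ)) * ‖f t‖ := by
      apply norm_integral_le_of_norm_le ((hfiδ.norm).const_mul _)
      filter_upwards [ae_restrict_mem measurableSet_Ioc] with t ht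
      rw [hgdef]
      simp only
      rw [norm_mul, hexp t]
      exact mul_le_mul_of_nonneg_right
        (Real.exp_le_exp.mpr (by nlinarith [ht.1])) (norm_nonneg _)
    rwa [integral_const_mul] at hle
  have hM0 : 0 ≤ M := integral_nonneg fun _ => norm_nonneg _
  have hk : 0 < τ ^ ((m':ℝ) + 1) := Real.rpow_pos_of_pos hτ0 _
  have h2b : Real.exp (-(τ * δ)) * M ≤ τ ^ (-((m':ℝ) + 1)) := by
    rw [Real.rpow_neg hτ0.le, ← one_div, le_div_iff₀ hk]
    calc Real.exp (-(τ * δ)) * M * τ ^ ((m':ℝ) + 1)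
        = M * (τ ^ ((m':ℝ) + 1) * Real.exp (-δ * τ)) := by
          rw [show -(τ * δ) = -δ * τ by ring]; ring
      _ ≤ 1 := h3
  have hnorm : ‖τ ^ (-((m':ℝ) + 1))‖ = τ ^ (-((m':ℝ) + 1)) := by
    rw [Real.norm_eq_abs, abs_of_pos (Real.rpow_pos_of_pos hτ0 _)]
  calc ‖∫ t in Set.Ioc (0:ℝ) T, g t‖
      ≤ ‖∫ t in Set.Ioc (0:ℝ) δ, g t‖ + ‖∫ t in Set.Ioc δ T, g t‖ := by
        rw [hsplit]; exact norm_add_le _ _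
    _ ≤ C * (Nat.factorial m' : ℝ) * τ ^ (-((m':ℝ) + 1)) + τ ^ (-((m':ℝ) + 1)) :=
        add_le_add hbound1 (hbound2.trans h2b)
    _ = (C * (Nat.factorial m' : ℝ) + 1) * τ ^ (-((m':ℝ) + 1)) := by ring
    _ = (C * (Nat.factorial m' : ℝ) + 1) * ‖τ ^ (-((m':ℝ) + 1))‖ := by rw [hnorm]
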